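/- For every n ≥ 1, the coefficient of t^1 in the polynomial p_n(t) = Σ_{m=0}^{n} d_m(n)·(t−1)^{n−m} equals 3^n − n − 1. (This is the second Betti number β_2(X(B_n)) of the toric variety X(B_n).) -/

import Mathlib

open Finset

/-- The set `𝓑` of nonempty subsets `B` of `{-n, …, -1, 1, …, n}` such that for no
`i ∈ {1, …, n}` both `i` and `-i` belong to `B`. -/
def calB (n : ℕ) : Set (Finset ℤ) :=
  {B | B.Nonempty ∧ (∀ z ∈ B, z ≠ 0 ∧ |z| ≤ (n : ℤ)) ∧
    ∀ i : ℤ, 1 ≤ i → i ≤ (n : ℤ) → ¬(i ∈ B ∧ -i ∈ B)}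

/-- `d_m(n)`: the number of chains `B^{(m)} ⊊ ⋯ ⊊ B^{(1)}` of `m` elements of `𝓑`
(the number of `m`-dimensional cones of the fan `Σ(B_n)`); `d_0(n) = 1`. -/
noncomputable def dB (n m : ℕ) : ℕ :=
  Set.ncard {c : Fin m → Finset ℤ |
    (∀ k l : Fin m, k < l → c l ⊂ c k) ∧ ∀ k, c k ∈ calB n}

namespace Stmt8Aux

/-! ### encoding of signed elements -/

def enc {n : ℕ} (i : Fin n) (b : Bool) : ℤ := if b then (i : ℤ) + 1 else -((i : ℤ) + 1)

lemma enc_ne_zero {n : ℕ} (i : Fin n) (b : Bool) : enc i b ≠ 0 := by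
  have := i.isLt
  cases b <;> simp [enc] <;> omega

lemma abs_enc_le {n : ℕ} (i : Fin n) (b : Bool) : |enc i b| ≤ (n : ℤ) := by
  have := i.isLt
  cases b <;> simp [enc, abs_le] <;> (try constructor) <;> push_cast <;> omega

lemma enc_inj {n : ℕ} {i i' : Fin n} {b b' : Bool} (h : enc i b = enc i' b') :
    i = i' ∧ b = b' := by
  have hi := i.isLt; have hi' := i'.isLt
  cases b <;> cases b' <;> simp [enc] at h ⊢ <;>
    [skip; omega; omega; skip] <;> exact Fin.ext (by exact_mod_cast h)

lemma exists_enc {n : ℕ} {z : ℤ} (hz : z ≠ 0) (hzn : |z| ≤ (n : ℤ)) :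
    ∃ (i : Fin n) (b : Bool), z = enc i b := by
  rcases lt_or_gt_of_ne hz with h | h
  · refine ⟨⟨(-z).toNat - 1, ?_⟩, false, ?_⟩
    · rw [abs_of_neg h] at hzn; omega
    · simp only [enc, if_neg Bool.false_ne_true]
      rw [abs_of_neg h] at hzn
      push_cast; omega
  · refine ⟨⟨z.toNat - 1, ?_⟩, true, ?_⟩
    · rw [abs_of_pos h] at hzn; omega
    · simp only [enc, if_pos rfl]
      rw [abs_of_pos h] at hzn
      push_cast; omega

/-! ### the function model -/

def hitsAll {n m : ℕ} (g : Fin n → Option (Bool × Fin m)) : Prop :=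
  ∀ j : Fin m, ∃ i b, g i = some (b, j)

instance {n m : ℕ} : DecidablePred (hitsAll (n := n) (m := m)) := fun _ => by
  unfold hitsAll; infer_instance

def Emod (n m : ℕ) : Finset (Fin n → Option (Bool × Fin m)) :=
  univ.filter hitsAll

/-! ### the chain associated to a function -/

def toChain {n m : ℕ} (g : Fin n → Option (Bool × Fin m)) (k : Fin m) : Finset ℤ :=
  univ.biUnion fun i => (g i).elim ∅ fun p => if k ≤ p.2 then {enc i p.1} else ∅

lemma mem_toChain {n m : ℕ} {g : Fin n → Option (Bool × Fin m)} {k : Fin m} {z : ℤ} :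
    z ∈ toChain g k ↔ ∃ i p, g i = some p ∧ k ≤ p.2 ∧ z = enc i p.1 := by
  simp only [toChain, mem_biUnion, mem_univ, true_and]
  constructor
  · rintro ⟨i, hi⟩
    cases hgi : g i with
    | none => rw [hgi] at hi; simp at hi
    | some p =>
      rw [hgi] at hi
      simp only [Option.elim_some] at hi
      split_ifs at hi with hk
      · exact ⟨i, p, hgi, hk, by simpa using hi⟩
      · simp at hi
  · rintro ⟨i, p, hp, hk, rfl⟩
    exact ⟨i, by simp [hp, hk]⟩

lemma toChain_mem {n m : ℕ} {g : Fin n → Option (Bool × Fin m)} (hg : hitsAll g) :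
    (∀ k l : Fin m, k < l → toChain g l ⊂ toChain g k) ∧ ∀ k, toChain g k ∈ calB n := by
  constructor
  · intro k l hkl
    rw [Finset.ssubset_def]
    constructor
    · intro z hz
      rw [mem_toChain] at hz ⊢
      obtain ⟨i, p, hp, hl, rfl⟩ := hz
      exact ⟨i, p, hp, le_trans (le_of_lt hkl) hl, rfl⟩
    · intro hsub
      obtain ⟨i, b, hib⟩ := hg k
      have hk : enc i b ∈ toChain g k := mem_toChain.mpr ⟨i, (b, k), hib, le_refl k, rfl⟩
      have hl := hsub hk
      rw [mem_toChain] at hl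
      obtain ⟨i', p', hp', hl', hz⟩ := hl
      obtain ⟨hii, hbb⟩ := enc_inj hz
      subst hii
      rw [hib] at hp'
      have hpk : p' = (b, k) := (Option.some_injective _ hp').symm
      rw [hpk] at hl'
      exact absurd hl' (not_le.mpr hkl)
  · intro k
    refine ⟨?_, ?_, ?_⟩
    · obtain ⟨i, b, hib⟩ := hg k
      exact ⟨enc i b, mem_toChain.mpr ⟨i, (b, k), hib, le_refl k, rfl⟩⟩
    · intro z hz
      rw [mem_toChain] at hz
      obtain ⟨i, p, hp, hk, rfl⟩ := hz
      exact ⟨enc_ne_zero i p.1, abs_enc_le i p.1⟩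
    · rintro x hx1 hxn ⟨hxk, hnegk⟩
      rw [mem_toChain] at hxk hnegk
      obtain ⟨i, p, hp, hk, hxe⟩ := hxk
      obtain ⟨i', p', hp', hk', hxe'⟩ := hnegk
      have hiv : (0 : ℤ) ≤ (i : ℤ) := by positivity
      have hiv' : (0 : ℤ) ≤ (i' : ℤ) := by positivity
      have hptrue : p.1 = true := by
        by_contra hf
        rw [Bool.not_eq_true] at hf
        rw [hf] at hxe
        simp only [enc, Bool.false_eq_true, if_false] at hxe
        omega
      have hpfalse : p'.1 = false := by
        by_contra hf
        rw [Bool.not_eq_false] at hf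
        rw [hf] at hxe'
        simp only [enc, if_true] at hxe'
        omega
      rw [hptrue] at hxe
      rw [hpfalse] at hxe'
      simp only [enc, if_true, Bool.false_eq_true, if_false] at hxe hxe'
      have hieq : (i : ℤ) = (i' : ℤ) := by omega
      have hii : i = i' := by
        apply Fin.ext
        exact_mod_cast hieq
      subst hii
      rw [hp] at hp'
      have hpp : p = p' := Option.some_injective _ hp'
      rw [hpp, hpfalse] at hptrue
      exact Bool.false_ne_true hptrue

lemma toChain_mem_of_some {n m : ℕ} {g g' : Fin n → Option (Bool × Fin m)}
    (h : toChain g = toChain g') {i : Fin n} {p : Bool × Fin m} (hp : g i = some p) :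
    ∃ q : Bool × Fin m, g' i = some q ∧ q.1 = p.1 ∧ p.2 ≤ q.2 := by
  have h1 : enc i p.1 ∈ toChain g' p.2 := by
    rw [← h]
    exact mem_toChain.mpr ⟨i, p, hp, le_refl _, rfl⟩
  rw [mem_toChain] at h1
  obtain ⟨i', q, hq, hle, hz⟩ := h1
  obtain ⟨hii, hbb⟩ := enc_inj hz
  subst hii
  exact ⟨q, hq, hbb.symm, hle⟩

lemma toChain_injective {n m : ℕ} {g g' : Fin n → Option (Bool × Fin m)}
    (hg : hitsAll g) (hg' : hitsAll g') (h : toChain g = toChain g') : g = g' := by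
  funext i
  cases hgi : g i with
  | none =>
    cases hgi' : g' i with
    | none => rfl
    | some p =>
      obtain ⟨q, hq, -, -⟩ := toChain_mem_of_some h.symm hgi'
      rw [hgi] at hq
      exact absurd hq (by simp)
  | some p =>
    cases hgi' : g' i with
    | none =>
      obtain ⟨q, hq, -, -⟩ := toChain_mem_of_some h hgi
      rw [hgi'] at hq
      exact absurd hq (by simp)
    | some q =>
      obtain ⟨q1, hq1, hb1, hle1⟩ := toChain_mem_of_some h hgi
      obtain ⟨q2, hq2, hb2, hle2⟩ := toChain_mem_of_some h.symm hgi'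
      rw [hgi'] at hq1
      rw [hgi] at hq2
      have e1 : q = q1 := Option.some.inj hq1
      have e2 : p = q2 := Option.some.inj hq2
      subst e1
      subst e2
      exact congrArg some (Prod.ext hb2 (le_antisymm hle1 hle2))

lemma toChain_surjective {n m : ℕ} (c : Fin m → Finset ℤ)
    (hchain : ∀ k l : Fin m, k < l → c l ⊂ c k) (hcal : ∀ k, c k ∈ calB n) :
    ∃ g : Fin n → Option (Bool × Fin m), hitsAll g ∧ toChain g = c := by
  classical
  have hmono : ∀ {k l : Fin m}, k ≤ l → c l ⊆ c k := by
    intro k l hkl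
    rcases eq_or_lt_of_le hkl with rfl | hlt
    · exact subset_rfl
    · exact (hchain k l hlt).subset
  have hsign : ∀ (i : Fin n) (k k' : Fin m), enc i true ∈ c k → enc i false ∈ c k' → False := by
    intro i k k' h1 h2
    simp only [enc, if_true, Bool.false_eq_true, if_false] at h1 h2
    have hin : (i : ℤ) + 1 ≤ (n : ℤ) := by
      have := i.isLt
      omega
    have h1' : (1 : ℤ) ≤ (i : ℤ) + 1 := by omega
    rcases le_total k k' with hle | hle
    · exact (hcal k).2.2 ((i : ℤ) + 1) h1' hin ⟨h1, hmono hle h2⟩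
    · exact (hcal k').2.2 ((i : ℤ) + 1) h1' hin ⟨hmono hle h1, h2⟩
  set T : Fin n → Bool → Finset (Fin m) := fun i b => univ.filter (fun j => enc i b ∈ c j)
    with hT
  have memT : ∀ i b j, j ∈ T i b ↔ enc i b ∈ c j := by
    intro i b j
    simp [hT]
  set g : Fin n → Option (Bool × Fin m) := fun i =>
    if h : (T i true).Nonempty then some (true, (T i true).max' h)
    else if h' : (T i false).Nonempty then some (false, (T i false).max' h')
    else none with hgdef
  have hspec1 : ∀ i p, g i = some p → enc i p.1 ∈ c p.2 := by
    intro i p hp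
    simp only [hgdef] at hp
    split_ifs at hp with h1 h2
    · obtain rfl : (true, (T i true).max' h1) = p := Option.some_injective _ hp
      exact (memT i true _).mp ((T i true).max'_mem h1)
    · obtain rfl : (false, (T i false).max' h2) = p := Option.some_injective _ hp
      exact (memT i false _).mp ((T i false).max'_mem h2)
  have hspec3 : ∀ i b k, enc i b ∈ c k → ∃ j, g i = some (b, j) ∧ k ≤ j := by
    intro i b k hk
    cases b with
    | false =>
      have hte : ¬ (T i true).Nonempty := by
        rintro ⟨j, hj⟩
        exact hsign i j k ((memT i true j).mp hj) hk
      have htf : (T i false).Nonempty := ⟨k, (memT i false k).mpr hk⟩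
      refine ⟨(T i false).max' htf, ?_, Finset.le_max' _ k ((memT i false k).mpr hk)⟩
      simp only [hgdef]
      rw [dif_neg hte, dif_pos htf]
    | true =>
      have htt : (T i true).Nonempty := ⟨k, (memT i true k).mpr hk⟩
      refine ⟨(T i true).max' htt, ?_, Finset.le_max' _ k ((memT i true k).mpr hk)⟩
      simp only [hgdef]
      rw [dif_pos htt]
  refine ⟨g, ?_, ?_⟩
  · intro j
    obtain ⟨z, hzj, hz_not⟩ : ∃ z, z ∈ c j ∧ ∀ l, j < l → z ∉ c l := by
      rcases lt_or_ge (j.val + 1) m with hj1 | hj1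
      · have hss := hchain j ⟨j.val + 1, hj1⟩ (by simp [Fin.lt_def])
        obtain ⟨z, hzk, hznot⟩ := Finset.exists_of_ssubset hss
        refine ⟨z, hzk, fun l hl hzl => hznot ?_⟩
        refine hmono ?_ hzl
        rw [Fin.lt_def] at hl
        rw [Fin.le_def]
        simpa using hl
      · obtain ⟨z, hz⟩ := (hcal j).1
        refine ⟨z, hz, fun l hl => absurd hl ?_⟩
        rw [Fin.lt_def]
        have := l.isLt
        omega
    obtain ⟨hz0, hzn⟩ := (hcal j).2.1 z hzj
    obtain ⟨i, b, rfl⟩ := exists_enc hz0 hzn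
    obtain ⟨j', hgi, hjj'⟩ := hspec3 i b j hzj
    have hjeq : j' = j := by
      rcases eq_or_lt_of_le hjj' with rfl | hlt
      · rfl
      · exact absurd (hspec1 i (b, j') hgi) (hz_not j' hlt)
    exact ⟨i, b, hjeq ▸ hgi⟩
  · funext k
    ext z
    rw [mem_toChain]
    constructor
    · rintro ⟨i, p, hp, hk, rfl⟩
      exact hmono hk (hspec1 i p hp)
    · intro hz
      obtain ⟨hz0, hzn⟩ := (hcal k).2.1 z hz
      obtain ⟨i, b, rfl⟩ := exists_enc hz0 hzn
      obtain ⟨j, hgi, hkj⟩ := hspec3 i b k hz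
      exact ⟨i, (b, j), hgi, hkj, rfl⟩

/-! ### Part A: dB = card Emod -/

lemma dB_eq_card (n m : ℕ) : dB n m = (Emod n m).card := by
  classical
  have hS : {c : Fin m → Finset ℤ |
      (∀ k l : Fin m, k < l → c l ⊂ c k) ∧ ∀ k, c k ∈ calB n}
      = (fun g : {g : Fin n → Option (Bool × Fin m) // hitsAll g} => toChain g.1) '' Set.univ := by
    ext c
    constructor
    · rintro ⟨h1, h2⟩
      obtain ⟨g, hg, rfl⟩ := toChain_surjective c h1 h2
      exact ⟨⟨g, hg⟩, trivial, rfl⟩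
    · rintro ⟨⟨g, hg⟩, -, rfl⟩
      exact toChain_mem hg
  rw [dB, hS, Set.ncard_image_of_injective _ (fun g g' hgg' =>
      Subtype.ext (toChain_injective g.2 g'.2 hgg')), Set.ncard_univ,
    Nat.card_eq_fintype_card, Fintype.card_subtype]
  rfl

/-! ### Part B: card Emod by inclusion-exclusion -/

lemma mem_inf_finsets {ι α : Type*} [DecidableEq α] [Fintype α] {s : Finset ι}
    {f : ι → Finset α} {a : α} : a ∈ s.inf f ↔ ∀ i ∈ s, a ∈ f i := by
  induction s using Finset.cons_induction with
  | empty => simp [Finset.inf_empty, Finset.top_eq_univ]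
  | cons b s hb ih => simp [Finset.inf_cons, Finset.inf_eq_inter, Finset.mem_inter, ih]

lemma card_Emod (n m : ℕ) :
    ((Emod n m).card : ℤ)
      = ∑ j ∈ range (m + 1), (-1 : ℤ) ^ j * (m.choose j) * (2 * (m - j) + 1) ^ n := by
  classical
  set S : Fin m → Finset (Fin n → Option (Bool × Fin m)) :=
    fun j => univ.filter (fun g => ∀ i b, g i ≠ some (b, j)) with hSdef
  have h1 : Emod n m = univ.inf fun j => (S j)ᶜ := by
    ext g
    simp only [Emod, hitsAll, mem_filter, mem_univ, true_and, mem_inf_finsets,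
      Finset.mem_compl, hSdef]
    push_neg
    tauto
  have h3 : ∀ t : Finset (Fin m), t.inf S
      = Fintype.piFinset (fun _ : Fin n =>
          univ.filter (fun v : Option (Bool × Fin m) => ∀ b j, v = some (b, j) → j ∉ t)) := by
    intro t
    ext g
    rw [Fintype.mem_piFinset, mem_inf_finsets]
    constructor
    · intro h i
      simp only [mem_filter, mem_univ, true_and]
      intro b j hv hj
      have := h j hj
      simp only [hSdef, mem_filter, mem_univ, true_and] at this
      exact this i b hv
    · intro h j hj
      simp only [hSdef, mem_filter, mem_univ, true_and]
      intro i b hib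
      have := h i
      simp only [mem_filter, mem_univ, true_and] at this
      exact this b j hib hj
  have hA : ∀ t : Finset (Fin m), t ⊆ univ →
      (univ.filter (fun v : Option (Bool × Fin m) => ∀ b j, v = some (b, j) → j ∉ t)).card
        = 2 * (m - t.card) + 1 := by
    intro t _
    have hcompl : (univ.filter
        (fun v : Option (Bool × Fin m) => ¬ ∀ b j, v = some (b, j) → j ∉ t))
        = ((univ : Finset Bool) ×ˢ t).image some := by
      ext v
      simp only [mem_filter, mem_univ, true_and, Finset.mem_image, Finset.mem_product]
      push_neg
      constructor
      · rintro ⟨b, j, hv, hj⟩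
        exact ⟨(b, j), hj, hv.symm⟩
      · rintro ⟨⟨b, j⟩, hj, hv⟩
        exact ⟨b, j, hv.symm, hj⟩
    have hsum := Finset.card_filter_add_card_filter_not
      (s := (univ : Finset (Option (Bool × Fin m))))
      (p := fun v => ∀ b j, v = some (b, j) → j ∉ t)
    rw [hcompl, Finset.card_image_of_injective _ (Option.some_injective _),
      Finset.card_product, Finset.card_univ] at hsum
    simp only [Finset.card_univ, Fintype.card_option, Fintype.card_prod, Fintype.card_bool,
      Fintype.card_fin, Fintype.card_bool] at hsum
    have ht : t.card ≤ m := by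
      have := Finset.card_le_univ t
      simpa using this
    omega
  have h2 := Finset.inclusion_exclusion_card_inf_compl (univ : Finset (Fin m)) S
  rw [← h1] at h2
  have h4 : ∀ t ∈ (univ : Finset (Fin m)).powerset,
      (-1 : ℤ) ^ t.card * (t.inf S).card
        = (fun j : ℕ => (-1 : ℤ) ^ j * (((2 * (m - j) + 1) ^ n : ℕ) : ℤ)) t.card := by
    intro t ht
    rw [Finset.mem_powerset] at ht
    rw [h3 t]
    simp only
    rw [Fintype.card_piFinset]
    rw [Finset.prod_const, Finset.card_univ, Fintype.card_fin, hA t ht]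
  rw [h2]
  refine (Finset.sum_congr rfl h4).trans ((Finset.sum_powerset_apply_card
      (fun j : ℕ => (-1 : ℤ) ^ j * (((2 * (m - j) + 1) ^ n : ℕ) : ℤ))).trans ?_)
  rw [Finset.card_univ, Fintype.card_fin]
  refine Finset.sum_congr rfl fun j hj => ?_
  rw [mem_range] at hj
  have hc : (((2 * (m - j) + 1) ^ n : ℕ) : ℤ) = (2 * ((m : ℤ) - j) + 1) ^ n := by
    have h5 : ((2 * (m - j) + 1 : ℕ) : ℤ) = 2 * ((m : ℤ) - j) + 1 := by omega
    rw [Nat.cast_pow, h5]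
  rw [nsmul_eq_mul, hc]
  ring

/-! ### Part C : the numerical identity -/

lemma neg_one_pow_sub (a b : ℕ) (h : b ≤ a) : ((-1 : ℤ)) ^ (a - b) = (-1) ^ (a + b) := by
  have h2 : a - b + 2 * b = a + b := by omega
  calc ((-1 : ℤ)) ^ (a - b) = (-1) ^ (a - b) * ((-1) ^ 2) ^ b := by norm_num
  _ = (-1) ^ (a - b + 2 * b) := by rw [← pow_mul, ← pow_add]
  _ = _ := by rw [h2]

lemma neg_one_pow_parity (a b : ℕ) (h : a % 2 = b % 2) : (-1 : ℤ) ^ a = (-1) ^ b := by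
  rcases Nat.even_or_odd a with ha | ha
  · have hb : Even b := by rw [Nat.even_iff] at ha ⊢; omega
    rw [ha.neg_one_pow, hb.neg_one_pow]
  · have hb : Odd b := by rw [Nat.odd_iff] at ha ⊢; omega
    rw [ha.neg_one_pow, hb.neg_one_pow]

lemma sum_Icc_nm_choose (i n : ℕ) :
    ∑ m ∈ Icc i n, (n - m) * m.choose i = (n + 1).choose (i + 2) := by
  induction n with
  | zero =>
    rcases Nat.eq_zero_or_pos i with rfl | hi
    · simp
    · rw [Finset.Icc_eq_empty (by omega), Finset.sum_empty,
        eq_comm, Nat.choose_eq_zero_of_lt (by omega)]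
  | succ n ih =>
    rcases le_or_gt i (n + 1) with hi | hi
    · rcases eq_or_lt_of_le hi with rfl | hi2
      · rw [Finset.Icc_self, Finset.sum_singleton, Nat.sub_self, zero_mul, eq_comm,
          Nat.choose_eq_zero_of_lt (by omega)]
      · have hi' : i ≤ n := by omega
        rw [← Finset.Ico_insert_right (by omega : i ≤ n + 1), Finset.Ico_add_one_right_eq_Icc,
          Finset.sum_insert (by simp), Nat.sub_self, zero_mul, zero_add]
        have hsplit : ∀ m ∈ Icc i n, (n + 1 - m) * m.choose i = (n - m) * m.choose i + m.choose i := by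
          intro m hm
          rw [Finset.mem_Icc] at hm
          have : n + 1 - m = (n - m) + 1 := by omega
          rw [this, add_mul, one_mul]
        rw [Finset.sum_congr rfl hsplit, Finset.sum_add_distrib, ih, Nat.sum_Icc_choose]
        have hp : i + 1 + 1 = i + 2 := rfl
        have hgoal := Nat.choose_succ_succ' (n + 1) (i + 1)
        rw [hp] at hgoal
        omega
    · rw [Finset.Icc_eq_empty (by omega), Finset.sum_empty, eq_comm,
        Nat.choose_eq_zero_of_lt (by omega)]

lemma fwdDiff_iter_zero_fun (k : ℕ) : (fwdDiff (1 : ℤ))^[k] (fun (_ : ℤ) => (0 : ℤ)) = fun _ => 0 := by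
  induction k with
  | zero => rfl
  | succ k ih => rw [Function.iterate_succ_apply, fwdDiff_const, ih]

lemma fwdDiff_affine_pow (d : ℕ) (c : ℤ) :
    (fwdDiff (1 : ℤ))^[d + 1] (fun x : ℤ => (2 * x + c) ^ d) = fun _ => 0 := by
  induction d using Nat.strong_induction_on with
  | _ d ih =>
  have hstep : fwdDiff (1 : ℤ) (fun x : ℤ => (2 * x + c) ^ d)
      = ∑ e ∈ range d, (2 ^ (d - e) * (d.choose e : ℤ)) • (fun x : ℤ => (2 * x + c) ^ e) := by
    funext x
    simp only [fwdDiff, Finset.sum_apply, Pi.smul_apply, smul_eq_mul]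
    have hb : (2 * (x + 1) + c) = (2 * x + c) + 2 := by ring
    rw [hb, add_pow, Finset.sum_range_succ]
    simp only [Nat.sub_self, pow_zero, Nat.choose_self, Nat.cast_one, mul_one, one_mul]
    rw [add_sub_cancel_right]
    exact Finset.sum_congr rfl fun e _ => by ring
  rw [Function.iterate_succ_apply, hstep, fwdDiff_iter_finset_sum]
  refine (Finset.sum_eq_zero fun e he => ?_)
  rw [mem_range] at he
  rw [fwdDiff_iter_const_smul]
  have hd : d = (d - (e + 1)) + (e + 1) := by omega
  rw [hd, Function.iterate_add_apply, ih e he, fwdDiff_iter_zero_fun]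
  ext x
  simp

lemma key_sum (n : ℕ) (hn : 1 ≤ n) :
    ∑ i ∈ range (n + 1), (-1 : ℤ) ^ (n + i + 1) * ((n + 1).choose (i + 2)) * (2 * i + 1) ^ n
      = 3 ^ n - n - 1 := by
  have h0 := fwdDiff_iter_eq_sum_shift (1 : ℤ) (fun x : ℤ => (2 * x + (-3)) ^ n) (n + 1) 0
  rw [fwdDiff_affine_pow n (-3)] at h0
  have h1 : (0 : ℤ) = ∑ k ∈ range (n + 2),
      (-1 : ℤ) ^ (n + 1 - k) * ((n + 1).choose k) * (2 * k - 3) ^ n := by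
    rw [show (0 : ℤ) = (fun _ : ℤ => (0:ℤ)) 0 from rfl, h0]
    refine Finset.sum_congr rfl fun k _ => ?_
    have : (0 : ℤ) + k • (1 : ℤ) = (k : ℤ) := by simp
    rw [this]
    push_cast
    rw [smul_eq_mul]
    ring
  rw [Finset.sum_range_succ' _ (n + 1), Finset.sum_range_succ' _ n] at h1
  norm_num at h1
  have h4 : (-1 : ℤ) ^ n * (-1) ^ n = 1 := by
    rw [← pow_add, neg_one_pow_parity (n + n) 0 (by omega), pow_zero]
  have h5 : (-1 : ℤ) ^ (n + 1) * (-1) ^ n = -1 := by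
    rw [← pow_add, neg_one_pow_parity (n + 1 + n) 1 (by omega), pow_one]
  have e1 : (-1 : ℤ) ^ n * ((n : ℤ) + 1) * (-1) ^ n = (n : ℤ) + 1 := by
    linear_combination ((n : ℤ) + 1) * h4
  have e0 : (-1 : ℤ) ^ (n + 1) * (-3 : ℤ) ^ n = -(3 ^ n) := by
    rw [neg_pow (3 : ℤ) n]
    linear_combination (3 : ℤ) ^ n * h5
  have e2 : ∑ x ∈ range n, (-1 : ℤ) ^ (n + 1 - (x + 1 + 1)) * ((n + 1).choose (x + 1 + 1))
      * (2 * ((x : ℤ) + 1 + 1) - 3) ^ n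
      = ∑ x ∈ range n, (-1 : ℤ) ^ (n + x + 1) * ((n + 1).choose (x + 2)) * (2 * x + 1) ^ n := by
    refine Finset.sum_congr rfl fun x hx => ?_
    rw [mem_range] at hx
    rw [neg_one_pow_parity (n + 1 - (x + 1 + 1)) (n + x + 1) (by omega)]
    have hq : ((2 : ℤ) * ((x : ℤ) + 1 + 1) - 3) = 2 * x + 1 := by ring
    rw [hq]
  rw [e2, e1, e0] at h1
  rw [Finset.sum_range_succ, Nat.choose_eq_zero_of_lt (by omega : n + 1 < n + 2)]
  push_cast
  linarith

lemma main_sum (n : ℕ) (hn : 1 ≤ n) :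
    ∑ m ∈ range (n + 1),
      (∑ j ∈ range (m + 1), (-1 : ℤ) ^ j * (m.choose j) * (2 * (m - j) + 1) ^ n)
        * ((-1) ^ (n - m - 1) * (n - m : ℕ)) = 3 ^ n - n - 1 := by
  have hterm : ∀ m ∈ range (n + 1),
      (∑ j ∈ range (m + 1), (-1 : ℤ) ^ j * (m.choose j) * (2 * (m - j) + 1) ^ n)
        * ((-1) ^ (n - m - 1) * (n - m : ℕ))
      = ∑ i ∈ range (n + 1), (if i ≤ m then
          (-1 : ℤ) ^ (n + i + 1) * (((n - m) * m.choose i : ℕ) : ℤ) * (2 * i + 1) ^ n else 0) := by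
    intro m hm
    rw [mem_range] at hm
    have hrefl : (∑ j ∈ range (m + 1), (-1 : ℤ) ^ j * (m.choose j) * (2 * (m - j) + 1) ^ n)
        = ∑ i ∈ range (m + 1), (-1 : ℤ) ^ (m + i) * (m.choose i) * (2 * i + 1) ^ n := by
      rw [← Finset.sum_range_reflect]
      refine Finset.sum_congr rfl fun i hi => ?_
      rw [mem_range] at hi
      have h1 : m + 1 - 1 - i = m - i := by omega
      rw [h1, Nat.choose_symm (by omega : i ≤ m),
        neg_one_pow_parity (m - i) (m + i) (by omega)]
      have h2 : ((m : ℤ) - ((m - i : ℕ) : ℤ)) = (i : ℤ) := by omega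
      rw [h2]
    rw [hrefl, ← Finset.sum_filter]
    have hfilter : (range (n + 1)).filter (fun i => i ≤ m) = range (m + 1) := by
      ext i; simp only [mem_filter, mem_range]; omega
    rw [hfilter, Finset.sum_mul]
    refine Finset.sum_congr rfl fun i hi => ?_
    rcases eq_or_lt_of_le (Nat.lt_succ_iff.mp hm) with rfl | hlt
    · simp
    · have hs : (-1 : ℤ) ^ (m + i) * (-1) ^ (n - m - 1) = (-1) ^ (n + i + 1) := by
        rw [← pow_add, neg_one_pow_parity ((m + i) + (n - m - 1)) (n + i + 1) (by omega)]
      have hc : ((((n - m) * m.choose i : ℕ)) : ℤ) = ((n - m : ℕ) : ℤ) * (m.choose i : ℤ) := by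
        push_cast; ring
      rw [hc, ← hs]
      ring
  rw [Finset.sum_congr rfl hterm, Finset.sum_comm]
  have hinner : ∀ i ∈ range (n + 1),
      (∑ m ∈ range (n + 1), (if i ≤ m then
          (-1 : ℤ) ^ (n + i + 1) * (((n - m) * m.choose i : ℕ) : ℤ) * (2 * i + 1) ^ n else 0))
      = (-1 : ℤ) ^ (n + i + 1) * ((n + 1).choose (i + 2)) * (2 * i + 1) ^ n := by
    intro i hi
    rw [← Finset.sum_filter]
    have hfilter2 : (range (n + 1)).filter (fun m => i ≤ m) = Icc i n := by
      ext x; simp only [mem_filter, mem_range, mem_Icc]; omega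
    rw [hfilter2, ← Finset.sum_mul, ← Finset.mul_sum, ← Nat.cast_sum, sum_Icc_nm_choose]
  rw [Finset.sum_congr rfl hinner]
  exact key_sum n hn

lemma coeff_X_sub_one_pow (k : ℕ) :
    ((Polynomial.X - 1 : Polynomial ℤ) ^ k).coeff 1 = (-1) ^ (k - 1) * k := by
  have h : (Polynomial.X - 1 : Polynomial ℤ) = Polynomial.X + Polynomial.C (-1) := by
    simp [sub_eq_add_neg]
  rw [h, Polynomial.coeff_X_add_C_pow, Nat.choose_one_right]

end Stmt8Aux

theorem stmt8 (n : ℕ) (hn : 1 ≤ n) :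
    (∑ m ∈ Finset.range (n + 1),
        (dB n m : Polynomial ℤ) * (Polynomial.X - 1) ^ (n - m)).coeff 1
      = (3 : ℤ) ^ n - (n : ℤ) - 1 := by
  rw [Polynomial.finset_sum_coeff]
  have h1 : ∀ m ∈ Finset.range (n + 1),
      ((dB n m : Polynomial ℤ) * (Polynomial.X - 1) ^ (n - m)).coeff 1
        = (∑ j ∈ Finset.range (m + 1),
            (-1 : ℤ) ^ j * (m.choose j) * (2 * (m - j) + 1) ^ n)
          * ((-1) ^ (n - m - 1) * (n - m : ℕ)) := by
    intro m _
    rw [show ((dB n m : Polynomial ℤ)) = Polynomial.C ((dB n m : ℤ)) by norm_cast,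
      Polynomial.coeff_C_mul, Stmt8Aux.coeff_X_sub_one_pow,
      Stmt8Aux.dB_eq_card, Stmt8Aux.card_Emod]
  rw [Finset.sum_congr rfl h1, Stmt8Aux.main_sum n hn]
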